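/- Let ≺ ∈ IPos_p and 1 ≤ q ≤ r ≤ p. Then WOIPd(≺_{[q,r]}) = (WOIPd ≺)_{[q,r]}. Consequently, for ⋖ ∈ WOIP_m and ⋖' ∈ WOIP_n, the set {≺ ∈ IPos_{m+n} : WOIPd(≺_{[1,m]}) = ⋖ and WOIPd(≺_{[m+1,m+n]}) = ⋖'} is the disjoint union, over all ⊏ ∈ (⋖ ⧢ ⋖') ∩ WOIP_{m+n}, of the sets {≺ ∈ IPos_{m+n} : WOIPd(≺) = ⊏}. The same statements hold with WOIPd replaced by IWOIPid (and WOIP by IWOIP) or by DWOIPdd (and WOIP by DWOIP). -/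

import Mathlib

namespace IntegerRelations

/-- An integer relation of size `p` is a reflexive binary relation on `Fin p`,
encoded as a set of pairs; `IsIRel R` says that `R` is reflexive. -/
def IsIRel {p : ℕ} (R : Set (Fin p × Fin p)) : Prop :=
  ∀ i : Fin p, (i, i) ∈ R

/-- The increasing subrelation `Inc R`. -/
def inc {p : ℕ} (R : Set (Fin p × Fin p)) : Set (Fin p × Fin p) :=
  {x ∈ R | x.1 < x.2}

/-- The decreasing subrelation `Dec R`. -/
def dec {p : ℕ} (R : Set (Fin p × Fin p)) : Set (Fin p × Fin p) :=
  {x ∈ R | x.2 < x.1}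

/-- The weak order: `R ≼ S` iff `Inc R ⊇ Inc S` and `Dec R ⊆ Dec S`. -/
def WOle {p : ℕ} (R S : Set (Fin p × Fin p)) : Prop :=
  inc S ⊆ inc R ∧ dec R ⊆ dec S

/-- Standardized restriction of a relation to a subset `X` of cardinality `k`. -/
def restrict {p k : ℕ} (R : Set (Fin p × Fin p)) (X : Finset (Fin p))
    (h : X.card = k) : Set (Fin k × Fin k) :=
  {x | ((X.orderIsoOfFin h x.1 : Fin p), (X.orderIsoOfFin h x.2 : Fin p)) ∈ R}

/-- Standardized restriction of a relation to the block of `k` consecutive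
positions starting at offset `o` (`0`-indexed). -/
def restrictRange {p : ℕ} (R : Set (Fin p × Fin p)) (o k : ℕ) :
    Set (Fin k × Fin k) :=
  {x | ∃ (h₁ : o + (x.1 : ℕ) < p) (h₂ : o + (x.2 : ℕ) < p),
      ((⟨o + (x.1 : ℕ), h₁⟩ : Fin p), (⟨o + (x.2 : ℕ), h₂⟩ : Fin p)) ∈ R}

/-- The relation `R` placed on the first `m` values of `[m+n]`. -/
def shiftL {m n : ℕ} (R : Set (Fin m × Fin m)) :
    Set (Fin (m + n) × Fin (m + n)) :=
  {x | ∃ y ∈ R, x = (Fin.castAdd n y.1, Fin.castAdd n y.2)}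

/-- The relation `S` shifted to the last `n` values of `[m+n]`. -/
def shiftR {m n : ℕ} (S : Set (Fin n × Fin n)) :
    Set (Fin (m + n) × Fin (m + n)) :=
  {x | ∃ y ∈ S, x = (Fin.natAdd m y.1, Fin.natAdd m y.2)}

/-- The full block `[m] × [n̄]`. -/
def lowHigh (m n : ℕ) : Set (Fin (m + n) × Fin (m + n)) :=
  {x | (x.1 : ℕ) < m ∧ m ≤ (x.2 : ℕ)}

/-- The full block `[n̄] × [m]`. -/
def highLow (m n : ℕ) : Set (Fin (m + n) × Fin (m + n)) :=
  {x | m ≤ (x.1 : ℕ) ∧ (x.2 : ℕ) < m}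

/-- The shifted shuffle `R ⧢ S` of two integer relations. -/
def shiftedShuffle {m n : ℕ} (R : Set (Fin m × Fin m)) (S : Set (Fin n × Fin n)) :
    Set (Set (Fin (m + n) × Fin (m + n))) :=
  {T | ∃ I D : Set (Fin (m + n) × Fin (m + n)),
      I ⊆ lowHigh m n ∧ D ⊆ highLow m n ∧
      T = shiftL R ∪ shiftR S ∪ I ∪ D}

/-- `underprod R S = R ∪ S̄ ∪ ([m] × [n̄])`. -/
def underprod {m n : ℕ} (R : Set (Fin m × Fin m)) (S : Set (Fin n × Fin n)) :
    Set (Fin (m + n) × Fin (m + n)) :=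
  shiftL R ∪ shiftR S ∪ lowHigh m n

/-- `overprod R S = R ∪ S̄ ∪ ([n̄] × [m])`. -/
def overprod {m n : ℕ} (R : Set (Fin m × Fin m)) (S : Set (Fin n × Fin n)) :
    Set (Fin (m + n) × Fin (m + n)) :=
  shiftL R ∪ shiftR S ∪ highLow m n

/-- A total cut `(X, Y)` of a relation `T`. -/
def IsTotalCut {p : ℕ} (T : Set (Fin p × Fin p)) (X Y : Finset (Fin p)) : Prop :=
  (∀ i : Fin p, i ∈ X ∨ i ∈ Y) ∧ Disjoint X Y ∧
    ∀ x ∈ X, ∀ y ∈ Y, (x, y) ∈ T ∧ (y, x) ∉ T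

/-- The convolution `R ∗ S` of two integer relations. -/
def convolution {m n : ℕ} (R : Set (Fin m × Fin m)) (S : Set (Fin n × Fin n)) :
    Set (Set (Fin (m + n) × Fin (m + n))) :=
  {T | ∃ (X Y : Finset (Fin (m + n))) (hX : X.card = m) (hY : Y.card = n),
      IsTotalCut T X Y ∧ restrict T X hX = R ∧ restrict T Y hY = S}

/-- An integer poset: a reflexive, antisymmetric and transitive integer relation. -/
def IsIPos {p : ℕ} (T : Set (Fin p × Fin p)) : Prop :=
  IsIRel T ∧ (∀ a b : Fin p, (a, b) ∈ T → (b, a) ∈ T → a = b) ∧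
    ∀ a b c : Fin p, (a, b) ∈ T → (b, c) ∈ T → (a, c) ∈ T

/-- A total order: an integer poset in which any two elements are comparable
(these are exactly the weak order element posets, `WOEP`). -/
def IsITotal {p : ℕ} (T : Set (Fin p × Fin p)) : Prop :=
  IsIPos T ∧ ∀ a b : Fin p, (a, b) ∈ T ∨ (b, a) ∈ T

/-- `T` admits a primitive cut at `k` (here positions are `0`-indexed, so the
`1`-indexed condition `i ≤ k < j` reads `i < k ≤ j`). -/
def HasPrimitiveCutAt {p : ℕ} (T : Set (Fin p × Fin p)) (k : ℕ) : Prop :=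
  ∀ i j : Fin p, (i : ℕ) < k → k ≤ (j : ℕ) → (i, j) ∈ T ∧ (j, i) ∉ T

/-- `T` is under-indecomposable: no non-trivial primitive cut. -/
def UnderIndecomposable {p : ℕ} (T : Set (Fin p × Fin p)) : Prop :=
  ∀ k : ℕ, 0 < k → k < p → ¬ HasPrimitiveCutAt T k

/-- Membership in `IWOIP`. -/
def InIWOIP {p : ℕ} (T : Set (Fin p × Fin p)) : Prop :=
  IsIPos T ∧ ∀ a b c : Fin p, a < b → b < c → (a, c) ∈ T → (a, b) ∈ T ∨ (b, c) ∈ T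

/-- Membership in `DWOIP`. -/
def InDWOIP {p : ℕ} (T : Set (Fin p × Fin p)) : Prop :=
  IsIPos T ∧ ∀ a b c : Fin p, a < b → b < c → (c, a) ∈ T → (b, a) ∈ T ∨ (c, b) ∈ T

/-- Membership in `WOIP = IWOIP ∩ DWOIP`. -/
def InWOIP {p : ℕ} (T : Set (Fin p × Fin p)) : Prop := InIWOIP T ∧ InDWOIP T

/-- Membership in `WOFP`. -/
def InWOFP {p : ℕ} (T : Set (Fin p × Fin p)) : Prop :=
  InWOIP T ∧ ∀ a b c : Fin p, a < b → b < c → (a, c) ∉ T → (c, a) ∉ T →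
    (((a, b) ∈ T ↔ (c, b) ∈ T) ∧ ((b, a) ∈ T ↔ (b, c) ∈ T))

/-- The `IWOIP` increasing deletion. -/
def IWOIPid {p : ℕ} (T : Set (Fin p × Fin p)) : Set (Fin p × Fin p) :=
  T \ {x | x.1 < x.2 ∧ ∃ l : List (Fin p), l ≠ [] ∧
      List.Chain (fun a b : Fin p => a < b ∧ (a, b) ∉ T) x.1 (l ++ [x.2])}

/-- The `DWOIP` decreasing deletion. -/
def DWOIPdd {p : ℕ} (T : Set (Fin p × Fin p)) : Set (Fin p × Fin p) :=
  T \ {x | x.2 < x.1 ∧ ∃ l : List (Fin p), l ≠ [] ∧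
      List.Chain (fun a b : Fin p => a < b ∧ (b, a) ∉ T) x.2 (l ++ [x.1])}

/-- The `WOIP` deletion. -/
def WOIPd {p : ℕ} (T : Set (Fin p × Fin p)) : Set (Fin p × Fin p) :=
  IWOIPid (DWOIPdd T)

/-- The chain poset `≺_σ` of a permutation: `u ≺_σ v` iff `σ⁻¹ u ≤ σ⁻¹ v`. -/
def chainPoset {p : ℕ} (σ : Equiv.Perm (Fin p)) : Set (Fin p × Fin p) :=
  {x | σ.symm x.1 ≤ σ.symm x.2}

/-- The shifted shuffle of two permutations. -/
def permShiftedShuffle {m n : ℕ} (σ : Equiv.Perm (Fin m)) (τ : Equiv.Perm (Fin n)) :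
    Set (Equiv.Perm (Fin (m + n))) :=
  {ρ | (∀ u v : Fin m,
        ρ.symm (Fin.castAdd n u) < ρ.symm (Fin.castAdd n v) ↔ σ.symm u < σ.symm v) ∧
      ∀ u v : Fin n,
        ρ.symm (Fin.natAdd m u) < ρ.symm (Fin.natAdd m v) ↔ τ.symm u < τ.symm v}

/-- The convolution of two permutations. -/
def permConvolution {m n : ℕ} (σ : Equiv.Perm (Fin m)) (τ : Equiv.Perm (Fin n)) :
    Set (Equiv.Perm (Fin (m + n))) :=
  {ρ | (∀ i j : Fin m, ρ (Fin.castAdd n i) < ρ (Fin.castAdd n j) ↔ σ i < σ j) ∧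
      ∀ i j : Fin n, ρ (Fin.natAdd m i) < ρ (Fin.natAdd m j) ↔ τ i < τ j}

/-- Relabelling of a relation along a bijection. -/
def relabel {p q : ℕ} (e : Fin p ≃ Fin q) (T : Set (Fin p × Fin p)) :
    Set (Fin q × Fin q) :=
  {x | (e.symm x.1, e.symm x.2) ∈ T}

/-- The diagonal `Δ_p`. -/
def diagonal (p : ℕ) : Set (Fin p × Fin p) := {x | x.1 = x.2}

variable {p : ℕ}

def Step (T : Set (Fin p × Fin p)) (a b : Fin p) : Prop := a < b ∧ (a, b) ∉ T

def D2 (T : Set (Fin p × Fin p)) (a c : Fin p) : Prop :=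
  ∃ b, Step T a b ∧ Relation.TransGen (Step T) b c

lemma tg_lt {T : Set (Fin p × Fin p)} {a b : Fin p}
    (h : Relation.TransGen (Step T) a b) : a < b := by
  induction h with
  | single h => exact h.1
  | tail _ h ih => exact ih.trans h.1

lemma D2.tg {T : Set (Fin p × Fin p)} {a c : Fin p} (h : D2 T a c) :
    Relation.TransGen (Step T) a c :=
  let ⟨b, h1, h2⟩ := h; Relation.TransGen.head h1 h2

lemma chain_iff_tg {T : Set (Fin p × Fin p)} {a c : Fin p} :
    (∃ l : List (Fin p), List.Chain (Step T) a (l ++ [c])) ↔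
      Relation.TransGen (Step T) a c := by
  constructor
  · rintro ⟨l, hl⟩
    induction l generalizing a with
    | nil => simpa using Relation.TransGen.single (by simpa [List.Chain] using hl)
    | cons b l ih =>
      rw [List.cons_append, List.Chain, List.chain_cons] at hl
      exact Relation.TransGen.head hl.1 (ih hl.2)
  · intro h
    induction h using Relation.TransGen.head_induction_on with
    | single h => exact ⟨[], by simpa [List.Chain] using h⟩
    | head h _ ih => obtain ⟨l, hl⟩ := ih; exact ⟨_ :: l, List.chain_cons.2 ⟨h, hl⟩⟩

lemma mem_IWOIPid {T : Set (Fin p × Fin p)} {x : Fin p × Fin p} :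
    x ∈ IWOIPid T ↔ x ∈ T ∧ ¬ D2 T x.1 x.2 := by
  unfold IWOIPid
  simp only [Set.mem_diff, Set.mem_setOf_eq]
  refine and_congr_right fun _ => not_congr ?_
  constructor
  · rintro ⟨-, l, hne, hl⟩
    match l with
    | b :: l =>
      rw [List.cons_append, List.Chain, List.chain_cons] at hl
      exact ⟨b, hl.1, chain_iff_tg.1 ⟨l, hl.2⟩⟩
  · rintro ⟨b, hb, htg⟩
    obtain ⟨l, hl⟩ := chain_iff_tg.2 htg
    exact ⟨hb.1.trans (tg_lt htg), b :: l, by simp,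
      List.chain_cons.2 ⟨hb, hl⟩⟩

def flipRel (T : Set (Fin p × Fin p)) : Set (Fin p × Fin p) := {x | (x.2, x.1) ∈ T}

lemma flip_flip (T : Set (Fin p × Fin p)) : flipRel (flipRel T) = T := rfl

lemma DWOIPdd_eq_flip (T : Set (Fin p × Fin p)) :
    DWOIPdd T = flipRel (IWOIPid (flipRel T)) := rfl

lemma D2_of_tg_tg {T : Set (Fin p × Fin p)} {a b c : Fin p}
    (h1 : Relation.TransGen (Step T) a b) (h2 : Relation.TransGen (Step T) b c) :
    D2 T a c := by
  induction h1 using Relation.TransGen.head_induction_on with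
  | single h => exact ⟨b, h, h2⟩
  | head h h' _ => exact ⟨_, h, h'.trans h2⟩

lemma tg_cases {T : Set (Fin p × Fin p)} {a c : Fin p}
    (h : Relation.TransGen (Step T) a c) : Step T a c ∨ D2 T a c := by
  induction h using Relation.TransGen.head_induction_on with
  | single h => exact Or.inl h
  | head h h' _ => exact Or.inr ⟨_, h, h'⟩

lemma tg_of_not_mem {T : Set (Fin p × Fin p)} {a b : Fin p} (hab : a < b)
    (h : (a, b) ∉ IWOIPid T) : Relation.TransGen (Step T) a b := by
  rw [mem_IWOIPid] at h
  by_cases hT : (a, b) ∈ T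
  · have : D2 T a b := by tauto
    exact this.tg
  · exact Relation.TransGen.single ⟨hab, hT⟩

lemma IWOIPid_cond (T : Set (Fin p × Fin p)) {a b c : Fin p} (hab : a < b)
    (hbc : b < c) (hac : (a, c) ∈ IWOIPid T) :
    (a, b) ∈ IWOIPid T ∨ (b, c) ∈ IWOIPid T := by
  by_contra h
  push_neg at h
  exact (mem_IWOIPid.1 hac).2
    (D2_of_tg_tg (tg_of_not_mem hab h.1) (tg_of_not_mem hbc h.2))

lemma tg_retarget {T : Set (Fin p × Fin p)}
    (htr : ∀ x y z : Fin p, (x, y) ∈ T → (y, z) ∈ T → (x, z) ∈ T)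
    {d c b : Fin p} (h : Relation.TransGen (Step T) d c)
    (hbc : (b, c) ∈ T) (hcb : c ≤ b) : Relation.TransGen (Step T) d b := by
  obtain ⟨e, hde, hec⟩ := Relation.TransGen.tail'_iff.1 h
  exact Relation.TransGen.tail' hde
    ⟨lt_of_lt_of_le hec.1 hcb, fun hm => hec.2 (htr _ _ _ hm hbc)⟩

lemma tg_split {T : Set (Fin p × Fin p)}
    (htr : ∀ x y z : Fin p, (x, y) ∈ T → (y, z) ∈ T → (x, z) ∈ T)
    {x c : Fin p} (h : Relation.TransGen (Step T) x c) :
    ∀ b : Fin p, x ≤ b → b < c →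
      Relation.TransGen (Step T) x b ∨ Relation.TransGen (Step T) b c := by
  induction h using Relation.TransGen.head_induction_on with
  | single h =>
    rename_i x
    intro b hxb hbc
    rcases eq_or_lt_of_le hxb with rfl | hxb
    · exact Or.inr (Relation.TransGen.single h)
    by_cases hT : (x, b) ∈ T
    · exact Or.inr (Relation.TransGen.single
        ⟨hbc, fun hm => h.2 (htr _ _ _ hT hm)⟩)
    · exact Or.inl (Relation.TransGen.single ⟨hxb, hT⟩)
  | head hstep htg ih =>
    rename_i x d
    intro b hxb hbc
    by_cases hbd : b < d
    · rcases eq_or_lt_of_le hxb with rfl | hxb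
      · exact Or.inr (Relation.TransGen.head hstep htg)
      by_cases hT : (x, b) ∈ T
      · refine Or.inr (Relation.TransGen.head
          ⟨hbd, fun hm => hstep.2 (htr _ _ _ hT hm)⟩ htg)
      · exact Or.inl (Relation.TransGen.single ⟨hxb, hT⟩)
    · rcases ih b (not_lt.1 hbd) hbc with h | h
      · exact Or.inl (Relation.TransGen.head hstep h)
      · exact Or.inr h

lemma IWOIPid_isIPos {T : Set (Fin p × Fin p)} (hT : IsIPos T) :
    IsIPos (IWOIPid T) := by
  obtain ⟨hrefl, hanti, htr⟩ := hT
  refine ⟨fun i => mem_IWOIPid.2 ⟨hrefl i, ?_⟩, fun a b hab hba =>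
    hanti a b (mem_IWOIPid.1 hab).1 (mem_IWOIPid.1 hba).1, ?_⟩
  · rintro hD2
    exact absurd (tg_lt hD2.tg) (lt_irrefl i)
  · intro a b c hab hbc
    have habT := (mem_IWOIPid.1 hab).1
    have hbcT := (mem_IWOIPid.1 hbc).1
    refine mem_IWOIPid.2 ⟨htr _ _ _ habT hbcT, fun hD2 => ?_⟩
    have hac : a < c := tg_lt hD2.tg
    rcases le_or_gt b a with hba | hab'
    · obtain ⟨d, hd, htg⟩ := hD2
      refine (mem_IWOIPid.1 hbc).2 ⟨d, ⟨lt_of_le_of_lt hba hd.1,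
        fun hm => hd.2 (htr _ _ _ habT hm)⟩, htg⟩
    rcases le_or_gt c b with hcb | hbc'
    · obtain ⟨d, hd, htg⟩ := hD2
      exact (mem_IWOIPid.1 hab).2 ⟨d, hd, tg_retarget htr htg hbcT hcb⟩
    rcases tg_split htr hD2.tg b hab'.le hbc' with h | h
    · rcases tg_cases h with h | h
      · exact h.2 habT
      · exact (mem_IWOIPid.1 hab).2 h
    · rcases tg_cases h with h | h
      · exact h.2 hbcT
      · exact (mem_IWOIPid.1 hbc).2 h

lemma IWOIPid_inIWOIP {T : Set (Fin p × Fin p)} (hT : IsIPos T) :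
    InIWOIP (IWOIPid T) :=
  ⟨IWOIPid_isIPos hT, fun _ _ _ hab hbc hac => IWOIPid_cond T hab hbc hac⟩

lemma IsIPos.flip {T : Set (Fin p × Fin p)} (hT : IsIPos T) : IsIPos (flipRel T) :=
  ⟨fun i => hT.1 i, fun a b h1 h2 => (hT.2.1 b a h1 h2).symm,
    fun _ _ _ h1 h2 => hT.2.2 _ _ _ h2 h1⟩

lemma InIWOIP.flip {T : Set (Fin p × Fin p)} (hT : InIWOIP T) : InDWOIP (flipRel T) :=
  ⟨hT.1.flip, fun a b c hab hbc h => hT.2 a b c hab hbc h⟩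

lemma InDWOIP.flip {T : Set (Fin p × Fin p)} (hT : InDWOIP T) : InIWOIP (flipRel T) :=
  ⟨hT.1.flip, fun a b c hab hbc h => hT.2 a b c hab hbc h⟩

lemma DWOIPdd_isIPos {T : Set (Fin p × Fin p)} (hT : IsIPos T) :
    IsIPos (DWOIPdd T) := by
  rw [DWOIPdd_eq_flip]
  exact (IWOIPid_isIPos hT.flip).flip

lemma DWOIPdd_inDWOIP {T : Set (Fin p × Fin p)} (hT : IsIPos T) :
    InDWOIP (DWOIPdd T) := by
  rw [DWOIPdd_eq_flip]
  exact (IWOIPid_inIWOIP hT.flip).flip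

lemma mem_IWOIPid_of_not_lt {T : Set (Fin p × Fin p)} {x : Fin p × Fin p}
    (hx : x ∈ T) (h : ¬ x.1 < x.2) : x ∈ IWOIPid T :=
  mem_IWOIPid.2 ⟨hx, fun hD2 => h (tg_lt hD2.tg)⟩

lemma WOIPd_inWOIP {T : Set (Fin p × Fin p)} (hT : IsIPos T) :
    InWOIP (WOIPd T) := by
  have hD : InDWOIP (DWOIPdd T) := DWOIPdd_inDWOIP hT
  refine ⟨IWOIPid_inIWOIP hD.1, IWOIPid_isIPos hD.1, ?_⟩
  intro a b c hab hbc h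
  rcases hD.2 a b c hab hbc (mem_IWOIPid.1 h).1 with h' | h'
  · exact Or.inl (mem_IWOIPid_of_not_lt h' (by exact not_lt.2 hab.le))
  · exact Or.inr (mem_IWOIPid_of_not_lt h' (by exact not_lt.2 hbc.le))

def emb {o k : ℕ} (h : o + k ≤ p) (i : Fin k) : Fin p :=
  ⟨o + i, by have := i.isLt; omega⟩

lemma restrictRange_eq {T : Set (Fin p × Fin p)} {o k : ℕ} (h : o + k ≤ p) :
    restrictRange T o k = {x | (emb h x.1, emb h x.2) ∈ T} := by
  ext x
  constructor
  · rintro ⟨h₁, h₂, hm⟩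
    exact hm
  · intro hm
    exact ⟨(emb h x.1).isLt, (emb h x.2).isLt, hm⟩

lemma mem_restrictRange {T : Set (Fin p × Fin p)} {o k : ℕ} (h : o + k ≤ p)
    {x : Fin k × Fin k} :
    x ∈ restrictRange T o k ↔ (emb h x.1, emb h x.2) ∈ T := by
  rw [restrictRange_eq h]; exact Iff.rfl

lemma emb_lt_emb {o k : ℕ} (h : o + k ≤ p) {i j : Fin k} :
    emb h i < emb h j ↔ i < j := by
  rw [Fin.lt_def, Fin.lt_def]
  show o + (i : ℕ) < o + (j : ℕ) ↔ (i : ℕ) < (j : ℕ)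
  omega

lemma step_restrict {T : Set (Fin p × Fin p)} {o k : ℕ} (h : o + k ≤ p)
    {u v : Fin k} :
    Step (restrictRange T o k) u v ↔ Step T (emb h u) (emb h v) := by
  rw [restrictRange_eq h]
  unfold Step
  rw [emb_lt_emb h]
  exact Iff.rfl

lemma exists_emb {o k : ℕ} (h : o + k ≤ p) {u v : Fin k} {c : Fin p}
    (h1 : emb h u < c) (h2 : c < emb h v) : ∃ w : Fin k, c = emb h w := by
  rw [Fin.lt_def] at h1 h2
  simp only [emb] at h1 h2 ⊢
  have hv := v.isLt
  exact ⟨⟨(c : ℕ) - o, by omega⟩, Fin.ext (by simp; omega)⟩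

lemma tg_emb {T : Set (Fin p × Fin p)} {o k : ℕ} (h : o + k ≤ p) {u v : Fin k}
    (htg : Relation.TransGen (Step (restrictRange T o k)) u v) :
    Relation.TransGen (Step T) (emb h u) (emb h v) :=
  Relation.TransGen.lift (emb h) (fun _ _ hs => (step_restrict h).1 hs) _ _ htg

lemma tg_emb_rev {T : Set (Fin p × Fin p)} {o k : ℕ} (h : o + k ≤ p) {u v : Fin k}
    (htg : Relation.TransGen (Step T) (emb h u) (emb h v)) :
    Relation.TransGen (Step (restrictRange T o k)) u v := by
  suffices H : ∀ x : Fin p, Relation.TransGen (Step T) x (emb h v) →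
      ∀ u : Fin k, x = emb h u → Relation.TransGen (Step (restrictRange T o k)) u v by
    exact H _ htg u rfl
  intro x hx
  induction hx using Relation.TransGen.head_induction_on with
  | single hb =>
    rintro u rfl
    exact Relation.TransGen.single ((step_restrict h).2 hb)
  | head hstep htg' ih =>
    rintro u rfl
    obtain ⟨w, rfl⟩ := exists_emb h hstep.1 (tg_lt htg')
    exact Relation.TransGen.head ((step_restrict h).2 hstep) (ih w rfl)

lemma D2_restrict {T : Set (Fin p × Fin p)} {o k : ℕ} (h : o + k ≤ p) {u v : Fin k} :
    D2 (restrictRange T o k) u v ↔ D2 T (emb h u) (emb h v) := by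
  constructor
  · rintro ⟨b, hb, htg⟩
    exact ⟨emb h b, (step_restrict h).1 hb, tg_emb h htg⟩
  · rintro ⟨c, hc, htg⟩
    obtain ⟨w, rfl⟩ := exists_emb h hc.1 (tg_lt htg)
    exact ⟨w, (step_restrict h).2 hc, tg_emb_rev h htg⟩

lemma IWOIPid_restrictRange {T : Set (Fin p × Fin p)} {o k : ℕ} (h : o + k ≤ p) :
    IWOIPid (restrictRange T o k) = restrictRange (IWOIPid T) o k := by
  ext x
  rw [mem_IWOIPid, mem_restrictRange h (T := IWOIPid T), mem_IWOIPid,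
    mem_restrictRange h (T := T)]
  exact and_congr Iff.rfl (not_congr (D2_restrict h))

lemma flip_restrictRange {T : Set (Fin p × Fin p)} {o k : ℕ} (h : o + k ≤ p) :
    restrictRange (flipRel T) o k = flipRel (restrictRange T o k) := by
  rw [restrictRange_eq h, restrictRange_eq h (T := T)]
  rfl

lemma DWOIPdd_restrictRange {T : Set (Fin p × Fin p)} {o k : ℕ} (h : o + k ≤ p) :
    DWOIPdd (restrictRange T o k) = restrictRange (DWOIPdd T) o k := by
  rw [DWOIPdd_eq_flip, ← flip_restrictRange h, IWOIPid_restrictRange h,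
    ← flip_restrictRange h (T := IWOIPid (flipRel T)), ← DWOIPdd_eq_flip]

lemma WOIPd_restrictRange {T : Set (Fin p × Fin p)} {o k : ℕ} (h : o + k ≤ p) :
    WOIPd (restrictRange T o k) = restrictRange (WOIPd T) o k := by
  rw [WOIPd, DWOIPdd_restrictRange h, IWOIPid_restrictRange h, WOIPd]

section Shuffle

variable {m n : ℕ} {A : Set (Fin m × Fin m)} {B : Set (Fin n × Fin n)}

lemma hlow : 0 + m ≤ m + n := by omega
lemma hhigh : m + n ≤ m + n := le_refl _

lemma emb_low (u : Fin m) : emb (hlow (n := n)) u = Fin.castAdd n u :=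
  Fin.ext (by simp [emb])

lemma emb_high (u : Fin n) : emb (hhigh (m := m)) u = Fin.natAdd m u :=
  Fin.ext (by simp [emb])

lemma restrict_low_eq {C : Set (Fin (m + n) × Fin (m + n))} :
    restrictRange C 0 m = {x | (Fin.castAdd n x.1, Fin.castAdd n x.2) ∈ C} := by
  rw [restrictRange_eq (hlow (n := n))]
  ext x
  rw [Set.mem_setOf_eq, Set.mem_setOf_eq, emb_low, emb_low]

lemma restrict_high_eq {C : Set (Fin (m + n) × Fin (m + n))} :
    restrictRange C m n = {x | (Fin.natAdd m x.1, Fin.natAdd m x.2) ∈ C} := by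
  rw [restrictRange_eq (hhigh (m := m))]
  ext x
  rw [Set.mem_setOf_eq, Set.mem_setOf_eq, emb_high, emb_high]

lemma mem_shuffle_iff {C : Set (Fin (m + n) × Fin (m + n))} :
    C ∈ shiftedShuffle A B ↔
      restrictRange C 0 m = A ∧ restrictRange C m n = B := by
  constructor
  · rintro ⟨I, D, hI, hD, rfl⟩
    constructor
    · rw [restrict_low_eq]
      ext x
      simp only [Set.mem_setOf_eq, Set.mem_union]
      constructor
      · rintro (((⟨y, hy, heq⟩ | ⟨y, hy, heq⟩) | hI') | hD')
        · have heq' := Prod.ext_iff.1 heq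
          have e1 : x.1 = y.1 := Fin.ext (by simpa using congrArg Fin.val heq'.1)
          have e2 : x.2 = y.2 := Fin.ext (by simpa using congrArg Fin.val heq'.2)
          rwa [show x = y from Prod.ext e1 e2]
        · have h1 : (x.1 : ℕ) = m + (y.1 : ℕ) :=
            congrArg Fin.val (congrArg Prod.fst heq)
          exact absurd h1 (by have := x.1.isLt; omega)
        · have h2 : m ≤ (x.2 : ℕ) := (hI hI').2
          exact absurd h2 (by have := x.2.isLt; omega)
        · have h2 : m ≤ (x.1 : ℕ) := (hD hD').1
          exact absurd h2 (by have := x.1.isLt; omega)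
      · intro hx
        exact Or.inl (Or.inl (Or.inl ⟨x, hx, rfl⟩))
    · rw [restrict_high_eq]
      ext x
      simp only [Set.mem_setOf_eq, Set.mem_union]
      constructor
      · rintro (((⟨y, hy, heq⟩ | ⟨y, hy, heq⟩) | hI') | hD')
        · have h1 : m + (x.1 : ℕ) = (y.1 : ℕ) :=
            congrArg Fin.val (congrArg Prod.fst heq)
          exact absurd h1 (by have := y.1.isLt; omega)
        · have heq' := Prod.ext_iff.1 heq
          have e1 : x.1 = y.1 := Fin.ext (Nat.add_left_cancel
            (by simpa using congrArg Fin.val heq'.1 : m + (x.1 : ℕ) = m + (y.1 : ℕ)))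
          have e2 : x.2 = y.2 := Fin.ext (Nat.add_left_cancel
            (by simpa using congrArg Fin.val heq'.2 : m + (x.2 : ℕ) = m + (y.2 : ℕ)))
          rwa [show x = y from Prod.ext e1 e2]
        · have h1 : m + (x.1 : ℕ) < m := (hI hI').1
          exact absurd h1 (by omega)
        · have h2 : m + (x.2 : ℕ) < m := (hD hD').2
          exact absurd h2 (by omega)
      · intro hx
        exact Or.inl (Or.inl (Or.inr ⟨x, hx, rfl⟩))
  · rintro ⟨hA, hB⟩
    refine ⟨C ∩ lowHigh m n, C ∩ highLow m n, Set.inter_subset_right,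
      Set.inter_subset_right, ?_⟩
    ext x
    constructor
    · intro hx
      by_cases h1 : (x.1 : ℕ) < m <;> by_cases h2 : (x.2 : ℕ) < m
      · refine Or.inl (Or.inl (Or.inl ⟨(⟨(x.1 : ℕ), h1⟩, ⟨(x.2 : ℕ), h2⟩), ?_, ?_⟩))
        · rw [← hA, restrict_low_eq]
          show (Fin.castAdd n ⟨(x.1 : ℕ), h1⟩, Fin.castAdd n ⟨(x.2 : ℕ), h2⟩) ∈ C
          have e1 : Fin.castAdd n (⟨(x.1 : ℕ), h1⟩ : Fin m) = x.1 := Fin.ext rfl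
          have e2 : Fin.castAdd n (⟨(x.2 : ℕ), h2⟩ : Fin m) = x.2 := Fin.ext rfl
          rw [e1, e2]; exact hx
        · exact Prod.ext (Fin.ext rfl).symm (Fin.ext rfl).symm
      · exact Or.inl (Or.inr ⟨hx, h1, not_lt.1 h2⟩)
      · exact Or.inr ⟨hx, not_lt.1 h1, h2⟩
      · refine Or.inl (Or.inl (Or.inr ⟨(⟨(x.1 : ℕ) - m, by have := x.1.isLt; omega⟩,
          ⟨(x.2 : ℕ) - m, by have := x.2.isLt; omega⟩), ?_, ?_⟩))
        · rw [← hB, restrict_high_eq]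
          show (Fin.natAdd m ⟨(x.1 : ℕ) - m, _⟩, Fin.natAdd m ⟨(x.2 : ℕ) - m, _⟩) ∈ C
          have e1 : Fin.natAdd m (⟨(x.1 : ℕ) - m,
              by have := x.1.isLt; omega⟩ : Fin n) = x.1 :=
            Fin.ext (by show m + ((x.1 : ℕ) - m) = (x.1 : ℕ); omega)
          have e2 : Fin.natAdd m (⟨(x.2 : ℕ) - m,
              by have := x.2.isLt; omega⟩ : Fin n) = x.2 :=
            Fin.ext (by show m + ((x.2 : ℕ) - m) = (x.2 : ℕ); omega)
          rw [e1, e2]; exact hx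
        · refine Prod.ext (Fin.ext ?_).symm (Fin.ext ?_).symm
          · show m + ((x.1 : ℕ) - m) = (x.1 : ℕ); omega
          · show m + ((x.2 : ℕ) - m) = (x.2 : ℕ); omega
    · rintro (((⟨y, hy, rfl⟩ | ⟨y, hy, rfl⟩) | hI') | hD')
      · rw [← hA, restrict_low_eq] at hy; exact hy
      · rw [← hB, restrict_high_eq] at hy; exact hy
      · exact hI'.1
      · exact hD'.1

end Shuffle

lemma fiber_decomp {m n : ℕ}
    (F : Set (Fin (m + n) × Fin (m + n)) → Set (Fin (m + n) × Fin (m + n)))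
    (Fm : Set (Fin (m + n) × Fin (m + n)) → Set (Fin m × Fin m))
    (Fn : Set (Fin (m + n) × Fin (m + n)) → Set (Fin n × Fin n))
    (hm : ∀ T, Fm T = restrictRange (F T) 0 m)
    (hn : ∀ T, Fn T = restrictRange (F T) m n)
    (P : Set (Fin (m + n) × Fin (m + n)) → Prop)
    (hP : ∀ T, IsIPos T → P (F T))
    (A : Set (Fin m × Fin m)) (B : Set (Fin n × Fin n)) :
    ({T | IsIPos T ∧ Fm T = A ∧ Fn T = B}
      = ⋃ (C : Set (Fin (m + n) × Fin (m + n)))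
          (_ : C ∈ shiftedShuffle A B ∧ P C), {T | IsIPos T ∧ F T = C}) ∧
    ∀ T, IsIPos T → Fm T = A → Fn T = B →
      ∃! C, C ∈ shiftedShuffle A B ∧ P C ∧ F T = C := by
  constructor
  · ext T
    simp only [Set.mem_setOf_eq, Set.mem_iUnion, exists_prop]
    constructor
    · rintro ⟨hpos, hA, hB⟩
      exact ⟨F T, ⟨mem_shuffle_iff.2 ⟨((hm T).symm.trans hA),
        ((hn T).symm.trans hB)⟩, hP T hpos⟩, hpos, rfl⟩
    · rintro ⟨C, ⟨hC, hPC⟩, hpos, rfl⟩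
      obtain ⟨h1, h2⟩ := mem_shuffle_iff.1 hC
      exact ⟨hpos, (hm T).trans h1, (hn T).trans h2⟩
  · intro T hpos hA hB
    exact ⟨F T, ⟨mem_shuffle_iff.2 ⟨((hm T).symm.trans hA),
      ((hn T).symm.trans hB)⟩, hP T hpos, rfl⟩, fun C hC => hC.2.2.symm⟩

/-- the `WOIP`, `IWOIP` and `DWOIP` deletions commute with
interval restrictions, and the induced fiber decompositions of the shifted
shuffle. -/
theorem WOIPd_restriction_and_fibers :
    (∀ (p : ℕ) (T : Set (Fin p × Fin p)), IsIPos T →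
      ∀ q r : ℕ, 1 ≤ q → q ≤ r → r ≤ p →
        WOIPd (restrictRange T (q - 1) (r - q + 1))
            = restrictRange (WOIPd T) (q - 1) (r - q + 1) ∧
        IWOIPid (restrictRange T (q - 1) (r - q + 1))
            = restrictRange (IWOIPid T) (q - 1) (r - q + 1) ∧
        DWOIPdd (restrictRange T (q - 1) (r - q + 1))
            = restrictRange (DWOIPdd T) (q - 1) (r - q + 1)) ∧
    (∀ (m n : ℕ) (A : Set (Fin m × Fin m)) (B : Set (Fin n × Fin n)),
      InWOIP A → InWOIP B →
        ({T : Set (Fin (m + n) × Fin (m + n)) | IsIPos T ∧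
            WOIPd (restrictRange T 0 m) = A ∧ WOIPd (restrictRange T m n) = B}
          = ⋃ (C : Set (Fin (m + n) × Fin (m + n)))
              (_ : C ∈ shiftedShuffle A B ∧ InWOIP C),
              {T | IsIPos T ∧ WOIPd T = C}) ∧
        ∀ T : Set (Fin (m + n) × Fin (m + n)), IsIPos T →
          WOIPd (restrictRange T 0 m) = A → WOIPd (restrictRange T m n) = B →
          ∃! C : Set (Fin (m + n) × Fin (m + n)),
            C ∈ shiftedShuffle A B ∧ InWOIP C ∧ WOIPd T = C) ∧
    (∀ (m n : ℕ) (A : Set (Fin m × Fin m)) (B : Set (Fin n × Fin n)),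
      InIWOIP A → InIWOIP B →
        ({T : Set (Fin (m + n) × Fin (m + n)) | IsIPos T ∧
            IWOIPid (restrictRange T 0 m) = A ∧ IWOIPid (restrictRange T m n) = B}
          = ⋃ (C : Set (Fin (m + n) × Fin (m + n)))
              (_ : C ∈ shiftedShuffle A B ∧ InIWOIP C),
              {T | IsIPos T ∧ IWOIPid T = C}) ∧
        ∀ T : Set (Fin (m + n) × Fin (m + n)), IsIPos T →
          IWOIPid (restrictRange T 0 m) = A → IWOIPid (restrictRange T m n) = B →
          ∃! C : Set (Fin (m + n) × Fin (m + n)),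
            C ∈ shiftedShuffle A B ∧ InIWOIP C ∧ IWOIPid T = C) ∧
    (∀ (m n : ℕ) (A : Set (Fin m × Fin m)) (B : Set (Fin n × Fin n)),
      InDWOIP A → InDWOIP B →
        ({T : Set (Fin (m + n) × Fin (m + n)) | IsIPos T ∧
            DWOIPdd (restrictRange T 0 m) = A ∧ DWOIPdd (restrictRange T m n) = B}
          = ⋃ (C : Set (Fin (m + n) × Fin (m + n)))
              (_ : C ∈ shiftedShuffle A B ∧ InDWOIP C),
              {T | IsIPos T ∧ DWOIPdd T = C}) ∧
        ∀ T : Set (Fin (m + n) × Fin (m + n)), IsIPos T →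
          DWOIPdd (restrictRange T 0 m) = A → DWOIPdd (restrictRange T m n) = B →
          ∃! C : Set (Fin (m + n) × Fin (m + n)),
            C ∈ shiftedShuffle A B ∧ InDWOIP C ∧ DWOIPdd T = C) := by
  refine ⟨?_, ?_, ?_, ?_⟩
  · intro p T _ q r hq hqr hrp
    have h : (q - 1) + (r - q + 1) ≤ p := by omega
    exact ⟨WOIPd_restrictRange h, IWOIPid_restrictRange h, DWOIPdd_restrictRange h⟩
  · intro m n A B _ _
    exact fiber_decomp WOIPd (fun T => WOIPd (restrictRange T 0 m))
      (fun T => WOIPd (restrictRange T m n))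
      (fun T => WOIPd_restrictRange hlow) (fun T => WOIPd_restrictRange hhigh)
      InWOIP (fun T hT => WOIPd_inWOIP hT) A B
  · intro m n A B _ _
    exact fiber_decomp IWOIPid (fun T => IWOIPid (restrictRange T 0 m))
      (fun T => IWOIPid (restrictRange T m n))
      (fun T => IWOIPid_restrictRange hlow) (fun T => IWOIPid_restrictRange hhigh)
      InIWOIP (fun T hT => IWOIPid_inIWOIP hT) A B
  · intro m n A B _ _
    exact fiber_decomp DWOIPdd (fun T => DWOIPdd (restrictRange T 0 m))
      (fun T => DWOIPdd (restrictRange T m n))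
      (fun T => DWOIPdd_restrictRange hlow) (fun T => DWOIPdd_restrictRange hhigh)
      InDWOIP (fun T hT => DWOIPdd_inDWOIP hT) A B

end IntegerRelations
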